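/- arXiv:2109.07956 — 2 statements merged into one kernel-verified Lean document; each statement's English description precedes it below -/
import Mathlib

section
/- (Credibility factors of the heterogeneous INAR(1) model.) Let T ≥ 2 be an integer, p ∈ [0,1), λ > 0, ψ₀ > 0. Set m = λ/(1−p), b = λψ₀/(1−p) and D = b(T − p(T−2)) + 1 + p. Let Σ = m²ψ₀·E_T + m·Σ_{T,p}, where E_T is the T×T all-ones matrix, and let c ∈ ℝ^T with c_j = m(p^{T+1−j} + mψ₀) for j = 1,…,T. Then Σ is invertible and the credibility factors w = Σ^{−1}c are given by: w_1 = b(1−p)/D; w_j = (1−p)·w_1 for every j with 2 ≤ j ≤ T−1; and w_T = w_1 + p. Moreover, the intercept satisfies m·(1 − Σ_{j=1}^T w_j) = λ(1−p²)/((1−p)·D). -/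
open Matrix Finset

/-- The T×T AR(1) correlation (Toeplitz) matrix with entries `p^{|i-j|}`. -/
noncomputable def sigmaMat (T : ℕ) (p : ℝ) : Matrix (Fin T) (Fin T) ℝ :=
  Matrix.of fun i j => p ^ (Int.natAbs ((i : ℤ) - (j : ℤ)))

/-- Cholesky-type factor of the AR(1) matrix. -/
noncomputable def lmatAux (T : ℕ) (p : ℝ) : Matrix (Fin T) (Fin T) ℝ :=
  Matrix.of fun k i => if (k : ℕ) = 0 then p ^ (i : ℕ)
    else if (k : ℕ) ≤ (i : ℕ) then Real.sqrt (1 - p ^ 2) * p ^ ((i : ℕ) - (k : ℕ)) else 0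

private lemma lmat_entry_sum (T : ℕ) (p : ℝ) (hp1 : 0 ≤ p) (hp2 : p < 1)
    {i j : ℕ} (hji : j ≤ i) (hi : i < T) :
    ∑ k ∈ range T,
      ((if k = 0 then p ^ i else if k ≤ i then Real.sqrt (1 - p ^ 2) * p ^ (i - k) else 0) *
       (if k = 0 then p ^ j else if k ≤ j then Real.sqrt (1 - p ^ 2) * p ^ (j - k) else 0))
      = p ^ (i - j) := by
  have hs2 : Real.sqrt (1 - p ^ 2) ^ 2 = 1 - p ^ 2 :=
    Real.sq_sqrt (by nlinarith)
  set s := Real.sqrt (1 - p ^ 2) with hs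
  set F : ℕ → ℝ := fun k =>
      ((if k = 0 then p ^ i else if k ≤ i then s * p ^ (i - k) else 0) *
       (if k = 0 then p ^ j else if k ≤ j then s * p ^ (j - k) else 0)) with hF
  have h1 : ∑ k ∈ range T, F k = F 0 + ∑ k ∈ Ico 1 T, F k := by
    rw [range_eq_Ico, ← Finset.sum_Ico_consecutive F (by omega : 0 ≤ 1) (by omega : 1 ≤ T)]
    congr 1
    simp
  have h2 : ∑ k ∈ Ico 1 T, F k = ∑ k ∈ Ico 1 (j + 1), F k := by
    rw [← Finset.sum_Ico_consecutive F (by omega : 1 ≤ j + 1) (by omega : j + 1 ≤ T)]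
    have hz : ∑ k ∈ Ico (j + 1) T, F k = 0 := by
      apply Finset.sum_eq_zero
      intro k hk
      simp only [Finset.mem_Ico] at hk
      have hk0 : k ≠ 0 := by omega
      have hkj : ¬ k ≤ j := by omega
      simp [hF, hk0, hkj]
    rw [hz, add_zero]
  have h3 : ∑ k ∈ Ico 1 (j + 1), F k
      = ∑ r ∈ range j, (s ^ 2 * p ^ (i - j)) * (p ^ 2) ^ r := by
    rw [Finset.sum_Ico_eq_sum_range]
    simp only [Nat.add_sub_cancel]
    rw [← Finset.sum_range_reflect (fun r => (s ^ 2 * p ^ (i - j)) * (p ^ 2) ^ r) j]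
    apply Finset.sum_congr rfl
    intro r hr
    simp only [Finset.mem_range] at hr
    have h10 : 1 + r ≠ 0 := by omega
    have h1i : 1 + r ≤ i := by omega
    have h1j : 1 + r ≤ j := by omega
    simp only [hF, h10, h1i, h1j, if_neg, if_pos, if_false, if_true]
    have e1 : i - (1 + r) = (i - j) + (j - 1 - r) := by omega
    have e2 : j - (1 + r) = j - 1 - r := by omega
    have e4 : (p ^ 2) ^ (j - 1 - r) = p ^ (j - 1 - r) * p ^ (j - 1 - r) := by
      rw [sq, mul_pow]
    rw [e1, e2, e4, pow_add]
    ring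
  have hg := geom_sum_mul (p ^ 2) j
  have e3 : (p ^ 2) ^ j * p ^ (i - j) = p ^ i * p ^ j := by
    rw [← pow_mul, ← pow_add, ← pow_add]
    congr 1
    omega
  have hF0 : F 0 = p ^ i * p ^ j := by simp [hF]
  rw [h1, h2, h3, ← Finset.mul_sum, hF0, hs2]
  linear_combination (-(p ^ (i - j))) * hg - e3

private lemma lmat_mul (T : ℕ) (p : ℝ) (hp1 : 0 ≤ p) (hp2 : p < 1) :
    (lmatAux T p)ᵀ * lmatAux T p = sigmaMat T p := by
  ext i j
  simp only [Matrix.mul_apply, Matrix.transpose_apply, lmatAux, sigmaMat, Matrix.of_apply]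
  rcases le_total (j : ℕ) (i : ℕ) with h | h
  · rw [Fin.sum_univ_eq_sum_range (fun k =>
      ((if k = 0 then p ^ (i:ℕ) else if k ≤ (i:ℕ) then Real.sqrt (1 - p ^ 2) * p ^ ((i:ℕ) - k) else 0) *
       (if k = 0 then p ^ (j:ℕ) else if k ≤ (j:ℕ) then Real.sqrt (1 - p ^ 2) * p ^ ((j:ℕ) - k) else 0))) T]
    rw [lmat_entry_sum T p hp1 hp2 h i.isLt]
    congr 1
    omega
  · have hc : ∀ k : Fin T,
      ((if (k:ℕ) = 0 then p ^ (i:ℕ) else if (k:ℕ) ≤ (i:ℕ) then Real.sqrt (1 - p ^ 2) * p ^ ((i:ℕ) - (k:ℕ)) else 0) *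
       (if (k:ℕ) = 0 then p ^ (j:ℕ) else if (k:ℕ) ≤ (j:ℕ) then Real.sqrt (1 - p ^ 2) * p ^ ((j:ℕ) - (k:ℕ)) else 0))
      = ((if (k:ℕ) = 0 then p ^ (j:ℕ) else if (k:ℕ) ≤ (j:ℕ) then Real.sqrt (1 - p ^ 2) * p ^ ((j:ℕ) - (k:ℕ)) else 0) *
       (if (k:ℕ) = 0 then p ^ (i:ℕ) else if (k:ℕ) ≤ (i:ℕ) then Real.sqrt (1 - p ^ 2) * p ^ ((i:ℕ) - (k:ℕ)) else 0)) :=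
      fun k => mul_comm _ _
    simp only [hc]
    rw [Fin.sum_univ_eq_sum_range (fun k =>
      ((if k = 0 then p ^ (j:ℕ) else if k ≤ (j:ℕ) then Real.sqrt (1 - p ^ 2) * p ^ ((j:ℕ) - k) else 0) *
       (if k = 0 then p ^ (i:ℕ) else if k ≤ (i:ℕ) then Real.sqrt (1 - p ^ 2) * p ^ ((i:ℕ) - k) else 0))) T]
    rw [lmat_entry_sum T p hp1 hp2 h j.isLt]
    congr 1
    omega

private lemma lmat_isUnit (T : ℕ) (p : ℝ) (hp1 : 0 ≤ p) (hp2 : p < 1) :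
    IsUnit (lmatAux T p) := by
  have hBT : (lmatAux T p).BlockTriangular id := by
    intro i j hij
    have hij' : (j : ℕ) < (i : ℕ) := hij
    have h1 : ¬ (i : ℕ) = 0 := by omega
    have h2 : ¬ (i : ℕ) ≤ (j : ℕ) := by omega
    simp only [lmatAux, Matrix.of_apply, if_neg h1, if_neg h2]
  rw [Matrix.isUnit_iff_isUnit_det, Matrix.det_of_upperTriangular hBT]
  apply Ne.isUnit
  apply Finset.prod_ne_zero_iff.mpr
  intro k _
  by_cases hk : (k : ℕ) = 0
  · simp only [lmatAux, Matrix.of_apply, if_pos hk, hk, pow_zero]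
    exact one_ne_zero
  · have hs : Real.sqrt (1 - p ^ 2) ≠ 0 := by
      have : (0:ℝ) < 1 - p ^ 2 := by nlinarith
      exact (Real.sqrt_pos.mpr this).ne'
    simp only [lmatAux, Matrix.of_apply, if_neg hk, if_pos (le_refl (k:ℕ)),
      Nat.sub_self, pow_zero, mul_one]
    exact hs

theorem sigmaMat_quad_pos (T : ℕ) (p : ℝ) (hp1 : 0 ≤ p) (hp2 : p < 1)
    (x : Fin T → ℝ) (hx : x ≠ 0) : 0 < x ⬝ᵥ (sigmaMat T p) *ᵥ x := by
  rw [← lmat_mul T p hp1 hp2, ← Matrix.mulVec_mulVec, Matrix.dotProduct_mulVec,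
    Matrix.vecMul_transpose]
  have hinj : Function.Injective (lmatAux T p).mulVec :=
    Matrix.mulVec_injective_iff_isUnit.mpr (lmat_isUnit T p hp1 hp2)
  have hne : (lmatAux T p) *ᵥ x ≠ 0 :=
    (hinj.ne_iff' (Matrix.mulVec_zero _)).mpr hx
  have := Matrix.dotProduct_star_self_pos_iff (v := (lmatAux T p) *ᵥ x) |>.mpr hne
  simpa using this

private lemma sumR (T : ℕ) (p : ℝ) (hp : p ≠ 1) {i : ℕ} (hi : i < T) :
    (1 - p) * ∑ j ∈ range T, p ^ (((i:ℤ) - (j:ℤ)).natAbs)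
      = 1 + p - p ^ (i + 1) - p ^ (T - i) := by
  set F : ℕ → ℝ := fun j => p ^ (((i:ℤ) - (j:ℤ)).natAbs) with hF
  have hsplit : ∑ j ∈ range T, F j = ∑ j ∈ Ico 0 (i+1), F j + ∑ j ∈ Ico (i+1) T, F j := by
    rw [range_eq_Ico, Finset.sum_Ico_consecutive F (by omega) (by omega)]
  have hS1 : ∑ j ∈ Ico 0 (i+1), F j = ∑ j ∈ range (i+1), p ^ j := by
    rw [← Finset.range_eq_Ico]
    calc ∑ j ∈ range (i+1), F j
        = ∑ j ∈ range (i+1), (fun k => p ^ k) ((i+1) - 1 - j) := by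
          apply Finset.sum_congr rfl
          intro j hj
          simp only [Finset.mem_range] at hj
          simp only [hF]
          congr 1
          omega
      _ = ∑ j ∈ range (i+1), p ^ j := Finset.sum_range_reflect (fun k => p ^ k) (i+1)
  have hS2 : ∑ j ∈ Ico (i+1) T, F j = (∑ k ∈ range (T - (i+1)), p ^ k) * p := by
    rw [Finset.sum_Ico_eq_sum_range, Finset.sum_mul]
    apply Finset.sum_congr rfl
    intro k hk
    simp only [hF]
    have : (((i:ℤ)) - ((i + 1 + k : ℕ) : ℤ)).natAbs = k + 1 := by omega
    rw [this, pow_succ]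
  have g1 := geom_sum_mul p (i+1)
  have g2 := geom_sum_mul p (T - (i+1))
  have e : p ^ (T - (i+1)) * p = p ^ (T - i) := by
    rw [← pow_succ]
    congr 1
    omega
  rw [hsplit, hS1, hS2]
  linear_combination (-1 : ℝ) * g1 - p * g2 - e

/-- credibility factors of the heterogeneous INAR(1) model.
With `m = λ/(1−p)`, `b = λψ₀/(1−p)`, `D = b(T − p(T−2)) + 1 + p`,
`Σ = m²ψ₀·E_T + m·Σ_{T,p}` and `c_j = m(p^{T+1−j} + mψ₀)`, the matrix `Σ` is
invertible and the credibility factors `w = Σ⁻¹c` satisfy `w_1 = b(1−p)/D`,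
`w_j = (1−p)·w_1` for `2 ≤ j ≤ T−1`, `w_T = w_1 + p`, and the intercept
satisfies `m·(1 − ∑_{j=1}^T w_j) = λ(1−p²)/((1−p)·D)`. -/
theorem stmt14 (T : ℕ) (hT : 2 ≤ T) (p : ℝ) (hp1 : 0 ≤ p) (hp2 : p < 1)
    (lam ψ₀ : ℝ) (hlam : 0 < lam) (hψ₀ : 0 < ψ₀) :
    IsUnit (((lam / (1 - p)) ^ 2 * ψ₀) • Matrix.of (fun _ _ : Fin T => (1 : ℝ)) +
      (lam / (1 - p)) • sigmaMat T p) ∧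
    (((lam / (1 - p)) ^ 2 * ψ₀) • Matrix.of (fun _ _ : Fin T => (1 : ℝ)) +
        (lam / (1 - p)) • sigmaMat T p)⁻¹.mulVec
        (fun j : Fin T =>
          (lam / (1 - p)) * (p ^ (T - (j : ℕ)) + (lam / (1 - p)) * ψ₀))
        ⟨0, by omega⟩ =
      (lam * ψ₀ / (1 - p)) * (1 - p) /
        ((lam * ψ₀ / (1 - p)) * ((T : ℝ) - p * ((T : ℝ) - 2)) + 1 + p) ∧
    (∀ j : Fin T, 1 ≤ (j : ℕ) → (j : ℕ) ≤ T - 2 →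
      (((lam / (1 - p)) ^ 2 * ψ₀) • Matrix.of (fun _ _ : Fin T => (1 : ℝ)) +
          (lam / (1 - p)) • sigmaMat T p)⁻¹.mulVec
          (fun j : Fin T =>
            (lam / (1 - p)) * (p ^ (T - (j : ℕ)) + (lam / (1 - p)) * ψ₀)) j =
        (1 - p) *
          (((lam / (1 - p)) ^ 2 * ψ₀) • Matrix.of (fun _ _ : Fin T => (1 : ℝ)) +
            (lam / (1 - p)) • sigmaMat T p)⁻¹.mulVec
            (fun j : Fin T =>
              (lam / (1 - p)) * (p ^ (T - (j : ℕ)) + (lam / (1 - p)) * ψ₀))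
            ⟨0, by omega⟩) ∧
    (((lam / (1 - p)) ^ 2 * ψ₀) • Matrix.of (fun _ _ : Fin T => (1 : ℝ)) +
        (lam / (1 - p)) • sigmaMat T p)⁻¹.mulVec
        (fun j : Fin T =>
          (lam / (1 - p)) * (p ^ (T - (j : ℕ)) + (lam / (1 - p)) * ψ₀))
        ⟨T - 1, by omega⟩ =
      (((lam / (1 - p)) ^ 2 * ψ₀) • Matrix.of (fun _ _ : Fin T => (1 : ℝ)) +
          (lam / (1 - p)) • sigmaMat T p)⁻¹.mulVec
          (fun j : Fin T =>
            (lam / (1 - p)) * (p ^ (T - (j : ℕ)) + (lam / (1 - p)) * ψ₀))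
          ⟨0, by omega⟩ + p ∧
    (lam / (1 - p)) *
        (1 - ∑ j : Fin T,
          (((lam / (1 - p)) ^ 2 * ψ₀) • Matrix.of (fun _ _ : Fin T => (1 : ℝ)) +
            (lam / (1 - p)) • sigmaMat T p)⁻¹.mulVec
            (fun j : Fin T =>
              (lam / (1 - p)) * (p ^ (T - (j : ℕ)) + (lam / (1 - p)) * ψ₀)) j) =
      lam * (1 - p ^ 2) /
        ((1 - p) *
          ((lam * ψ₀ / (1 - p)) * ((T : ℝ) - p * ((T : ℝ) - 2)) + 1 + p)) := by
  have h1p : (0:ℝ) < 1 - p := by linarith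
  have hpne : p ≠ 1 := by linarith
  set m := lam / (1 - p) with hm
  have hm0 : 0 < m := div_pos hlam h1p
  set b := m * ψ₀ with hbdef
  have hb : lam * ψ₀ / (1 - p) = b := by rw [hbdef, hm]; ring
  have hb0 : 0 < b := mul_pos hm0 hψ₀
  have hT2 : (2:ℝ) ≤ (T:ℝ) := by exact_mod_cast hT
  set K := (T : ℝ) - p * ((T : ℝ) - 2) with hK
  have hK0 : 0 < K := by rw [hK]; nlinarith
  set Dd := b * K + 1 + p with hD
  have hD0 : 0 < Dd := by rw [hD]; nlinarith [mul_pos hb0 hK0]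
  have hDne : b * K + 1 + p ≠ 0 := by rw [← hD]; exact hD0.ne'
  set w1 := b * (1 - p) / Dd with hw1
  set W : ℕ → ℝ := fun n => if n = 0 then w1 else if n = T - 1 then w1 + p else (1 - p) * w1
    with hW
  set w : Fin T → ℝ := fun j => W (j : ℕ) with hwdef
  set A := (m ^ 2 * ψ₀) • Matrix.of (fun _ _ : Fin T => (1 : ℝ)) + m • sigmaMat T p with hA
  set cv : Fin T → ℝ := fun j => m * (p ^ (T - (j : ℕ)) + m * ψ₀) with hcv
  -- decomposition of the weights
  have hWdec : ∀ n, n < T →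
      W n = (1-p)*w1 + (if n = 0 then p*w1 else 0) + (if n = T-1 then p*w1 + p else 0) := by
    intro n hn
    by_cases h0 : n = 0
    · have hnT : ¬ n = T - 1 := by omega
      simp only [hW, if_pos h0, if_neg hnT]
      ring
    · by_cases h1' : n = T - 1
      · simp only [hW, if_neg h0, if_pos h1']
        ring
      · simp only [hW, if_neg h0, if_neg h1']
        ring
  -- generic weighted sums of the weights
  have hgen : ∀ g : ℕ → ℝ, ∑ j ∈ range T, g j * W j
      = (∑ j ∈ range T, g j) * ((1-p)*w1) + g 0 * (p*w1) + g (T-1) * (p*w1+p) := by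
    intro g
    have hpt : ∀ j ∈ range T, g j * W j
        = g j * ((1-p)*w1) + (if j = 0 then g j * (p*w1) else 0)
          + (if j = T-1 then g j * (p*w1+p) else 0) := by
      intro j hj
      rw [hWdec j (Finset.mem_range.mp hj)]
      split_ifs <;> ring
    rw [Finset.sum_congr rfl hpt, Finset.sum_add_distrib, Finset.sum_add_distrib,
      Finset.sum_ite_eq' (range T) 0 (fun j => g j * (p*w1)),
      Finset.sum_ite_eq' (range T) (T-1) (fun j => g j * (p*w1+p)), ← Finset.sum_mul,
      if_pos (Finset.mem_range.mpr (by omega : 0 < T)),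
      if_pos (Finset.mem_range.mpr (by omega : T - 1 < T))]
  have hsumW : ∑ j ∈ range T, W j = w1 * K + p := by
    have h := hgen (fun _ => 1)
    simp only [one_mul, Finset.sum_const, Finset.card_range, nsmul_eq_mul] at h
    rw [h, hK]
    ring
  -- the key weighted sum with AR(1) coefficients
  have hkey : ∀ i : Fin T,
      ∑ j ∈ range T, p ^ ((((i:ℕ):ℤ) - (j:ℤ)).natAbs) * W j
        = w1 * (1+p) + p ^ (T - (i:ℕ)) := by
    intro i
    have hi : (i:ℕ) < T := i.isLt
    have hR := sumR T p hpne hi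
    have h := hgen (fun j => p ^ ((((i:ℕ):ℤ) - (j:ℤ)).natAbs))
    rw [h]
    have e0 : ((((i:ℕ):ℤ)) - ((0:ℕ):ℤ)).natAbs = (i:ℕ) := by omega
    have eT : ((((i:ℕ):ℤ)) - (((T-1 : ℕ)):ℤ)).natAbs = T - 1 - (i:ℕ) := by omega
    rw [e0, eT]
    have e1 : p ^ ((i:ℕ)+1) = p^(i:ℕ) * p := pow_succ p _
    have e2 : p ^ (T - (i:ℕ)) = p ^ (T - 1 - (i:ℕ)) * p := by
      rw [← pow_succ]
      congr 1
      omega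
    rw [e2] at hR ⊢
    rw [e1] at hR
    linear_combination w1 * hR
  -- the linear system
  have hmulvec : A *ᵥ w = cv := by
    funext i
    have expand : (A *ᵥ w) i = ∑ j : Fin T,
        (m ^ 2 * ψ₀ * W (j:ℕ) + m * (p ^ ((((i:ℕ):ℤ) - ((j:ℕ):ℤ)).natAbs) * W (j:ℕ))) := by
      simp only [hA, Matrix.mulVec, dotProduct, Matrix.add_apply, Matrix.smul_apply,
        Matrix.of_apply, sigmaMat, smul_eq_mul, hwdef]
      exact Finset.sum_congr rfl fun j _ => by ring
    rw [expand, Finset.sum_add_distrib, ← Finset.mul_sum, ← Finset.mul_sum,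
      Fin.sum_univ_eq_sum_range W T,
      Fin.sum_univ_eq_sum_range (fun j => p ^ ((((i:ℕ):ℤ) - (j:ℤ)).natAbs) * W j) T,
      hsumW, hkey i]
    show m ^ 2 * ψ₀ * (w1 * K + p) + m * (w1 * (1 + p) + p ^ (T - (i:ℕ)))
        = m * (p ^ (T - (i:ℕ)) + m * ψ₀)
    rw [hw1, hD, hbdef]
    have hDne' : m * ψ₀ * K + 1 + p ≠ 0 := by rw [← hbdef]; exact hDne
    field_simp
    ring
  -- positive definiteness
  have hPD : A.PosDef := by
    refine Matrix.PosDef.of_dotProduct_mulVec_pos ?_ fun x hx => ?_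
    · rw [hA]
      ext i j
      simp only [Matrix.conjTranspose_apply, Matrix.add_apply, Matrix.smul_apply,
        Matrix.of_apply, sigmaMat, smul_eq_mul, star_trivial]
      have hnab : ((((j:ℕ):ℤ)) - (((i:ℕ)):ℤ)).natAbs = ((((i:ℕ):ℤ)) - (((j:ℕ)):ℤ)).natAbs := by
        omega
      rw [hnab]
    · have hsx : star x = x := by
        funext k
        simp
      rw [hsx, hA, Matrix.add_mulVec, Matrix.smul_mulVec, Matrix.smul_mulVec,
        dotProduct_add, dotProduct_smul, dotProduct_smul, smul_eq_mul, smul_eq_mul]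
      have hE : x ⬝ᵥ (Matrix.of (fun _ _ : Fin T => (1:ℝ))) *ᵥ x = (∑ i, x i)^2 := by
        simp only [Matrix.mulVec, dotProduct, Matrix.of_apply, one_mul]
        rw [← Finset.sum_mul, sq]
      rw [hE]
      have hq := sigmaMat_quad_pos T p hp1 hp2 x hx
      have hnn : (0:ℝ) ≤ m^2*ψ₀ := by positivity
      exact add_pos_of_nonneg_of_pos (mul_nonneg hnn (sq_nonneg _)) (mul_pos hm0 hq)
  have hUnit : IsUnit A := hPD.isUnit
  have hdet : IsUnit A.det := (Matrix.isUnit_iff_isUnit_det A).mp hUnit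
  have hInv : A⁻¹ *ᵥ cv = w := by
    rw [← hmulvec, Matrix.mulVec_mulVec, Matrix.nonsing_inv_mul A hdet, Matrix.one_mulVec]
  have hW0 : W 0 = w1 := by simp [hW]
  have hWT : W (T-1) = w1 + p := by
    have h : ¬ (T - 1 = 0) := by omega
    simp [hW, h]
  have hWmid : ∀ n : ℕ, ¬ n = 0 → ¬ n = T - 1 → W n = (1-p) * w1 := by
    intro n h1 h2
    simp [hW, h1, h2]
  have h1pne : (1:ℝ) - p ≠ 0 := h1p.ne'
  refine ⟨hUnit, ?_, ?_, ?_, ?_⟩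
  · rw [hInv]
    show W 0 = _
    rw [hW0, hb, ← hD, ← hw1]
  · intro j hj1 hj2
    rw [hInv]
    have hne0 : ¬ (j:ℕ) = 0 := by omega
    have hneT : ¬ (j:ℕ) = T - 1 := by omega
    show W (j:ℕ) = (1-p) * W 0
    rw [hW0, hWmid (j:ℕ) hne0 hneT]
  · rw [hInv]
    show W (T-1) = W 0 + p
    rw [hWT, hW0]
  · rw [hInv, Fin.sum_univ_eq_sum_range W T, hsumW]
    have hden : ((1:ℝ)-p) * ((lam * ψ₀ / (1 - p)) * ((T:ℝ) - p*((T:ℝ)-2)) + 1 + p) ≠ 0 := by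
      rw [hb, ← hK, ← hD]
      exact (mul_pos h1p hD0).ne'
    rw [eq_div_iff hden, hb, hw1, hD, hm]
    field_simp [hDne]
    rw [hK]
    ring
end

section
/- (Failure of the ordering of credibility factors in the heterogeneous INAR(1) model.) Let T ≥ 3 be an integer, p ∈ (0,1), λ > 0, ψ₀ > 0, and set m = λ/(1−p). Let Σ = m²ψ₀·E_T + m·Σ_{T,p} and c_j = m(p^{T+1−j} + mψ₀) for j = 1,…,T. Then the credibility factors w = Σ^{−1}c satisfy w_1 > w_j for every j with 2 ≤ j ≤ T−1, and w_T > w_1 > 0. In particular, the credibility factors are not monotonically nondecreasing in j, even though the covariance c_j is strictly increasing in j. -/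
open Matrix

namespace Stmt15Aux

open Finset

noncomputable def Umat (T : ℕ) (p : ℝ) : Matrix (Fin T) (Fin T) ℝ :=
  Matrix.of fun i j => if (i : ℕ) ≤ (j : ℕ) then p ^ ((j : ℕ) - (i : ℕ)) else 0

noncomputable def dvec (T : ℕ) (p : ℝ) : Fin T → ℝ :=
  fun k => if (k : ℕ) = 0 then 1 else 1 - p ^ 2

lemma geom' (p : ℝ) (n : ℕ) : (1 - p) * ∑ k ∈ range n, p ^ k = 1 - p ^ n := by
  have h := geom_sum_mul p n
  nlinarith [h]

lemma natAbs_eq' (T : ℕ) (i j : Fin T) :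
    Int.natAbs ((i : ℤ) - (j : ℤ)) =
      if (j : ℕ) ≤ (i : ℕ) then (i : ℕ) - (j : ℕ) else (j : ℕ) - (i : ℕ) := by
  rcases le_or_gt (j : ℕ) (i : ℕ) with h | h
  · rw [if_pos h]; omega
  · rw [if_neg (by omega)]; omega

lemma key {T : ℕ} (p : ℝ) (i j : Fin T) (hij : (i : ℕ) ≤ (j : ℕ)) :
    ∑ k : Fin T, Umat T p k i * (dvec T p k * Umat T p k j)
      = p ^ ((j : ℕ) - (i : ℕ)) := by
  have hiT : (i : ℕ) < T := i.isLt
  have h1 : ∑ k : Fin T, Umat T p k i * (dvec T p k * Umat T p k j)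
      = ∑ k ∈ range T, (if k ≤ (i : ℕ) then p ^ ((i : ℕ) - k) else 0) *
          ((if k = 0 then 1 else 1 - p ^ 2) *
            (if k ≤ (j : ℕ) then p ^ ((j : ℕ) - k) else 0)) := by
    rw [← Fin.sum_univ_eq_sum_range (fun k =>
      (if k ≤ (i : ℕ) then p ^ ((i : ℕ) - k) else 0) *
          ((if k = 0 then 1 else 1 - p ^ 2) *
            (if k ≤ (j : ℕ) then p ^ ((j : ℕ) - k) else 0))) T]
    rfl
  rw [h1]
  have h2 : ∑ k ∈ range T, (if k ≤ (i : ℕ) then p ^ ((i : ℕ) - k) else 0) *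
          ((if k = 0 then 1 else 1 - p ^ 2) *
            (if k ≤ (j : ℕ) then p ^ ((j : ℕ) - k) else 0))
      = ∑ k ∈ range ((i : ℕ) + 1), (if k ≤ (i : ℕ) then p ^ ((i : ℕ) - k) else 0) *
          ((if k = 0 then 1 else 1 - p ^ 2) *
            (if k ≤ (j : ℕ) then p ^ ((j : ℕ) - k) else 0)) := by
    symm
    apply Finset.sum_subset
    · intro x hx; simp only [mem_range] at *; omega
    · intro x _ hx
      simp only [mem_range, not_lt] at hx
      rw [if_neg (by omega)]
      ring
  rw [h2, Finset.sum_range_succ']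
  have h3 : ∀ k ∈ range (i : ℕ),
      (if k + 1 ≤ (i : ℕ) then p ^ ((i : ℕ) - (k + 1)) else 0) *
          ((if k + 1 = 0 then 1 else 1 - p ^ 2) *
            (if k + 1 ≤ (j : ℕ) then p ^ ((j : ℕ) - (k + 1)) else 0))
      = (1 - p ^ 2) * ((p ^ 2) ^ ((i : ℕ) - 1 - k) * p ^ ((j : ℕ) - (i : ℕ))) := by
    intro k hk
    simp only [mem_range] at hk
    rw [if_pos (by omega), if_neg (by omega), if_pos (by omega)]
    have e1 : (i : ℕ) - (k + 1) + ((j : ℕ) - (k + 1)) =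
        2 * ((i : ℕ) - 1 - k) + ((j : ℕ) - (i : ℕ)) := by omega
    have e2 : p ^ ((i : ℕ) - (k + 1)) * p ^ ((j : ℕ) - (k + 1))
        = (p ^ 2) ^ ((i : ℕ) - 1 - k) * p ^ ((j : ℕ) - (i : ℕ)) := by
      rw [← pow_add, e1, pow_add, pow_mul]
    linear_combination (1 - p ^ 2) * e2
  rw [Finset.sum_congr rfl h3]
  have h4 : ∑ k ∈ range (i : ℕ),
      (1 - p ^ 2) * ((p ^ 2) ^ ((i : ℕ) - 1 - k) * p ^ ((j : ℕ) - (i : ℕ)))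
      = (1 - (p ^ 2) ^ (i : ℕ)) * p ^ ((j : ℕ) - (i : ℕ)) := by
    rw [Finset.sum_range_reflect
        (fun k => (1 - p ^ 2) * ((p ^ 2) ^ k * p ^ ((j : ℕ) - (i : ℕ)))) (i : ℕ),
      ← Finset.mul_sum, ← Finset.sum_mul, ← mul_assoc, geom' (p ^ 2) (i : ℕ)]
  rw [h4]
  rw [if_pos (Nat.zero_le _), if_pos rfl, if_pos (Nat.zero_le _)]
  simp only [Nat.sub_zero]
  have e3 : (p ^ 2) ^ (i : ℕ) * p ^ ((j : ℕ) - (i : ℕ)) = p ^ (i : ℕ) * p ^ (j : ℕ) := by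
    rw [← pow_mul, ← pow_add, ← pow_add]
    congr 1
    omega
  linear_combination -e3

lemma decomp (T : ℕ) (p : ℝ) :
    sigmaMat T p = (Umat T p)ᵀ * (Matrix.diagonal (dvec T p) * Umat T p) := by
  ext i j
  rw [Matrix.mul_apply]
  simp only [Matrix.transpose_apply, Matrix.diagonal_mul]
  rcases le_or_gt (i : ℕ) (j : ℕ) with h | h
  · rw [key p i j h]
    show p ^ _ = _
    rw [natAbs_eq' T i j]
    rcases le_or_gt (j : ℕ) (i : ℕ) with h' | h'
    · rw [if_pos h']; congr 1; omega
    · rw [if_neg (by omega)]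
  · have hk := key p j i (le_of_lt h)
    have hsymm : ∑ k : Fin T, Umat T p k i * (dvec T p k * Umat T p k j)
        = ∑ k : Fin T, Umat T p k j * (dvec T p k * Umat T p k i) := by
      apply Finset.sum_congr rfl; intro k _; ring
    rw [hsymm, hk]
    show p ^ _ = _
    rw [natAbs_eq' T i j, if_pos (le_of_lt h)]

lemma Umat_det (T : ℕ) (p : ℝ) : (Umat T p).det = 1 := by
  rw [Matrix.det_of_upperTriangular (M := Umat T p) ?ht]
  · simp [Umat]
  · intro i j hij
    simp only [Umat, Matrix.of_apply]
    rw [if_neg]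
    exact fun hc => absurd (Fin.le_def.mpr hc) (not_le.mpr hij)

lemma Umat_mulVec_inj (T : ℕ) (p : ℝ) : Function.Injective (Umat T p).mulVec := by
  apply Matrix.mulVec_injective_iff_isUnit.2
  rw [Matrix.isUnit_iff_isUnit_det, Umat_det]
  exact isUnit_one

lemma quad_pos (T : ℕ) (p : ℝ) (hp1 : 0 < p) (hp2 : p < 1) (x : Fin T → ℝ) (hx : x ≠ 0) :
    0 < x ⬝ᵥ (sigmaMat T p).mulVec x := by
  have hy : (Umat T p).mulVec x ≠ 0 := by
    intro hc
    exact hx (Umat_mulVec_inj T p (by rw [hc, Matrix.mulVec_zero]))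
  set y := (Umat T p).mulVec x with hydef
  have hq : x ⬝ᵥ (sigmaMat T p).mulVec x = ∑ k : Fin T, dvec T p k * (y k * y k) := by
    rw [decomp, ← Matrix.mulVec_mulVec, ← Matrix.mulVec_mulVec,
      Matrix.dotProduct_mulVec, Matrix.vecMul_transpose]
    rw [dotProduct]
    apply Finset.sum_congr rfl
    intro k _
    rw [Matrix.mulVec_diagonal]
    ring
  rw [hq]
  have hd : ∀ k : Fin T, 0 < dvec T p k := by
    intro k
    simp only [dvec]
    split
    · norm_num
    · nlinarith
  obtain ⟨k, hk⟩ := Function.ne_iff.mp hy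
  apply Finset.sum_pos'
  · intro k _
    have := hd k
    nlinarith [sq_nonneg (y k)]
  · exact ⟨k, Finset.mem_univ k, mul_pos (hd k) (mul_self_pos.mpr hk)⟩

/-- Row sums of the AR(1) Toeplitz matrix, times (1-p). -/
lemma rowsum (T : ℕ) (p : ℝ) (i : Fin T) :
    ∑ j : Fin T, sigmaMat T p i j * (1 - p)
      = 1 + p - p ^ ((i : ℕ) + 1) - p ^ (T - (i : ℕ)) := by
  have hiT : (i : ℕ) < T := i.isLt
  have h1 : ∑ j : Fin T, sigmaMat T p i j * (1 - p)
      = ∑ k ∈ range T,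
          (p ^ (if k ≤ (i : ℕ) then (i : ℕ) - k else k - (i : ℕ)) * (1 - p)) := by
    rw [← Fin.sum_univ_eq_sum_range (fun k =>
      p ^ (if k ≤ (i : ℕ) then (i : ℕ) - k else k - (i : ℕ)) * (1 - p)) T]
    apply Finset.sum_congr rfl
    intro j _
    congr 2
    rw [show sigmaMat T p i j = p ^ (Int.natAbs ((i : ℤ) - (j : ℤ))) from rfl,
      natAbs_eq' T i j]
  rw [h1, range_eq_Ico, ← Finset.sum_Ico_consecutive _ (Nat.zero_le (i : ℕ)) (le_of_lt hiT)]
  have h2 : ∑ k ∈ Ico 0 (i : ℕ),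
      (p ^ (if k ≤ (i : ℕ) then (i : ℕ) - k else k - (i : ℕ)) * (1 - p))
      = ∑ k ∈ range (i : ℕ), p ^ (k + 1) * (1 - p) := by
    rw [← Finset.range_eq_Ico]
    rw [← Finset.sum_range_reflect (fun k => p ^ (k + 1) * (1 - p)) (i : ℕ)]
    apply Finset.sum_congr rfl
    intro k hk
    simp only [mem_range] at hk
    rw [if_pos (by omega)]
    congr 2
    omega
  have h3 : ∑ k ∈ Ico (i : ℕ) T,
      (p ^ (if k ≤ (i : ℕ) then (i : ℕ) - k else k - (i : ℕ)) * (1 - p))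
      = ∑ k ∈ range (T - (i : ℕ)), p ^ k * (1 - p) := by
    rw [Finset.sum_Ico_eq_sum_range]
    apply Finset.sum_congr rfl
    intro k hk
    simp only [mem_range] at hk
    rcases Nat.eq_zero_or_pos k with hk0 | hk0
    · subst hk0; rw [if_pos (by omega)]; congr 2; omega
    · rw [if_neg (by omega)]; congr 2; omega
  rw [h2, h3]
  have g1 : ∑ k ∈ range (i : ℕ), p ^ (k + 1) * (1 - p)
      = p * ((1 - p) * ∑ k ∈ range (i : ℕ), p ^ k) := by
    simp only [Finset.mul_sum]
    apply Finset.sum_congr rfl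
    intro k _
    rw [pow_succ]
    ring
  have g2 : ∑ k ∈ range (T - (i : ℕ)), p ^ k * (1 - p)
      = (1 - p) * ∑ k ∈ range (T - (i : ℕ)), p ^ k := by
    simp only [Finset.mul_sum]
    apply Finset.sum_congr rfl
    intro k _
    ring
  rw [g1, g2, geom' p (i : ℕ), geom' p (T - (i : ℕ))]
  have hps : p * p ^ (i : ℕ) = p ^ ((i : ℕ) + 1) := by rw [pow_succ]; ring
  linear_combination -hps

noncomputable def uvec (T : ℕ) (p : ℝ) : Fin T → ℝ :=
  fun j => ((1 - p) + (if (j : ℕ) = 0 then p else 0) +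
    (if (j : ℕ) = T - 1 then p else 0)) / (1 + p)

lemma ind_sum {T : ℕ} (g : Fin T → ℝ) (c : ℝ) (n : ℕ) (hn : n < T) :
    ∑ j : Fin T, g j * (if (j : ℕ) = n then c else 0) = g ⟨n, hn⟩ * c := by
  rw [Finset.sum_eq_single (⟨n, hn⟩ : Fin T)]
  · simp
  · intro b _ hb
    have : (b : ℕ) ≠ n := fun h => hb (Fin.ext h)
    simp [this]
  · simp

lemma sum_ind {T : ℕ} (c : ℝ) (n : ℕ) (hn : n < T) :
    ∑ j : Fin T, (if (j : ℕ) = n then c else 0) = c := by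
  have := ind_sum (fun _ : Fin T => (1 : ℝ)) c n hn
  simpa using this

lemma sigma_col_last (T : ℕ) (hT : 1 ≤ T) (p : ℝ) (i : Fin T) :
    ∑ j : Fin T, sigmaMat T p i j * (if (j : ℕ) = T - 1 then p else 0)
      = p ^ (T - (i : ℕ)) := by
  rw [ind_sum (fun j => sigmaMat T p i j) p (T - 1) (by omega)]
  have h1 : sigmaMat T p i ⟨T - 1, by omega⟩ = p ^ (T - 1 - (i : ℕ)) := by
    show p ^ _ = _
    congr 1
    simp only [Fin.val_mk]
    have := i.isLt
    omega
  rw [h1, ← pow_succ]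
  congr 1
  have := i.isLt
  omega

lemma sigma_col_first (T : ℕ) (hT : 1 ≤ T) (p : ℝ) (i : Fin T) :
    ∑ j : Fin T, sigmaMat T p i j * (if (j : ℕ) = 0 then p else 0)
      = p ^ ((i : ℕ) + 1) := by
  rw [ind_sum (fun j => sigmaMat T p i j) p 0 (by omega)]
  have h1 : sigmaMat T p i ⟨0, by omega⟩ = p ^ (i : ℕ) := by
    show p ^ _ = _
    congr 1
  rw [h1, ← pow_succ]

lemma L1 (T : ℕ) (hT : 1 ≤ T) (p : ℝ) (hp1 : 0 < p) (hp2 : p < 1) (i : Fin T) :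
    ∑ j : Fin T, sigmaMat T p i j * uvec T p j = 1 := by
  have hp : (1 : ℝ) + p ≠ 0 := by nlinarith
  have expand : ∀ j : Fin T, sigmaMat T p i j * uvec T p j
      = (sigmaMat T p i j * (1 - p)
        + sigmaMat T p i j * (if (j : ℕ) = 0 then p else 0)
        + sigmaMat T p i j * (if (j : ℕ) = T - 1 then p else 0)) / (1 + p) := by
    intro j
    rw [uvec]
    ring
  rw [Finset.sum_congr rfl (fun j _ => expand j), ← Finset.sum_div]
  rw [Finset.sum_add_distrib, Finset.sum_add_distrib]
  rw [rowsum T p i, sigma_col_first T hT p i, sigma_col_last T hT p i]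
  field_simp
  ring

lemma sum_uvec (T : ℕ) (hT : 2 ≤ T) (p : ℝ) :
    ∑ j : Fin T, uvec T p j = ((T : ℝ) * (1 - p) + 2 * p) / (1 + p) := by
  simp only [uvec]
  rw [← Finset.sum_div]
  congr 1
  rw [Finset.sum_add_distrib, Finset.sum_add_distrib]
  have e1 : ∑ _j : Fin T, (1 - p) = (T : ℝ) * (1 - p) := by
    rw [Finset.sum_const, Finset.card_univ, Fintype.card_fin, nsmul_eq_mul]
  have e2 : ∑ j : Fin T, (if (j : ℕ) = 0 then p else 0) = p := sum_ind p 0 (by omega)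
  have e3 : ∑ j : Fin T, (if (j : ℕ) = T - 1 then p else 0) = p :=
    sum_ind p (T - 1) (by omega)
  rw [e1, e2, e3]
  ring

noncomputable def wvec (T : ℕ) (p κ : ℝ) : Fin T → ℝ :=
  fun j => (if (j : ℕ) = T - 1 then p else 0) + κ * uvec T p j

lemma solve (T : ℕ) (hT : 3 ≤ T) (p : ℝ) (hp1 : 0 < p) (hp2 : p < 1)
    (m ψ₀ : ℝ) (hm : 0 < m) (hψ₀ : 0 < ψ₀) :
    ((m ^ 2 * ψ₀) • Matrix.of (fun _ _ : Fin T => (1 : ℝ)) + m • sigmaMat T p)⁻¹.mulVec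
        (fun j : Fin T => m * (p ^ (T - (j : ℕ)) + m * ψ₀))
      = wvec T p (m * ψ₀ * (1 - p) /
          (1 + m * ψ₀ * (((T : ℝ) * (1 - p) + 2 * p) / (1 + p)))) := by
  have h1p : (0 : ℝ) < 1 - p := by linarith
  have hp1p : (0 : ℝ) < 1 + p := by linarith
  have hTd : (3 : ℝ) ≤ (T : ℝ) := by exact_mod_cast hT
  set S : ℝ := ((T : ℝ) * (1 - p) + 2 * p) / (1 + p) with hS_def
  have hS : 0 < S := by
    apply div_pos _ hp1p
    nlinarith
  have hden : 0 < 1 + m * ψ₀ * S := by nlinarith [mul_pos (mul_pos hm hψ₀) hS]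
  set κ : ℝ := m * ψ₀ * (1 - p) / (1 + m * ψ₀ * S) with hκ_def
  have hκeq : κ * (1 + m * ψ₀ * S) = m * ψ₀ * (1 - p) := by
    rw [hκ_def, div_mul_cancel₀ _ hden.ne']
  set A : Matrix (Fin T) (Fin T) ℝ :=
    (m ^ 2 * ψ₀) • Matrix.of (fun _ _ : Fin T => (1 : ℝ)) + m • sigmaMat T p with hA_def
  have hquadA : ∀ x : Fin T → ℝ, x ≠ 0 → 0 < x ⬝ᵥ A.mulVec x := by
    intro x hx
    rw [hA_def, Matrix.add_mulVec, Matrix.smul_mulVec, Matrix.smul_mulVec,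
      dotProduct_add, dotProduct_smul, dotProduct_smul, smul_eq_mul, smul_eq_mul]
    have hEv : (Matrix.of (fun _ _ : Fin T => (1 : ℝ))).mulVec x = fun _ => ∑ j, x j := by
      funext i
      simp [Matrix.mulVec, dotProduct]
    have hE : x ⬝ᵥ (Matrix.of (fun _ _ : Fin T => (1 : ℝ))).mulVec x
        = (∑ j, x j) * (∑ j, x j) := by
      rw [hEv, dotProduct, ← Finset.sum_mul]
    rw [hE]
    have h2 := quad_pos T p hp1 hp2 x hx
    have h3 : 0 ≤ m ^ 2 * ψ₀ * ((∑ j, x j) * (∑ j, x j)) :=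
      mul_nonneg (mul_nonneg (sq_nonneg m) hψ₀.le) (mul_self_nonneg _)
    nlinarith [mul_pos hm h2]
  have hinj : Function.Injective A.mulVec := by
    intro x y hxy
    by_contra hne
    have hsub : A.mulVec (x - y) = 0 := by rw [Matrix.mulVec_sub, hxy, sub_self]
    have hx0 : x - y ≠ 0 := sub_ne_zero.mpr hne
    have hcon := hquadA (x - y) hx0
    rw [hsub, dotProduct_zero] at hcon
    exact lt_irrefl 0 hcon
  have hdet : IsUnit A.det :=
    (Matrix.isUnit_iff_isUnit_det A).mp (Matrix.mulVec_injective_iff_isUnit.mp hinj)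
  have hsolve : A.mulVec (wvec T p κ)
      = fun j : Fin T => m * (p ^ (T - (j : ℕ)) + m * ψ₀) := by
    funext i
    have hEw : (Matrix.of (fun _ _ : Fin T => (1 : ℝ))).mulVec (wvec T p κ) i
        = p + κ * S := by
      have hterm : ∀ j : Fin T, (Matrix.of (fun _ _ : Fin T => (1 : ℝ))) i j * wvec T p κ j
          = (if (j : ℕ) = T - 1 then p else 0) + κ * uvec T p j := by
        intro j
        show 1 * _ = _
        rw [one_mul, wvec]
      rw [Matrix.mulVec, dotProduct, Finset.sum_congr rfl (fun j _ => hterm j),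
        Finset.sum_add_distrib, sum_ind p (T - 1) (by omega), ← Finset.mul_sum,
        sum_uvec T (by omega) p, hS_def]
    have hSw : (sigmaMat T p).mulVec (wvec T p κ) i = p ^ (T - (i : ℕ)) + κ := by
      have hterm : ∀ j : Fin T, sigmaMat T p i j * wvec T p κ j
          = sigmaMat T p i j * (if (j : ℕ) = T - 1 then p else 0)
            + κ * (sigmaMat T p i j * uvec T p j) := by
        intro j
        rw [wvec]
        ring
      rw [Matrix.mulVec, dotProduct, Finset.sum_congr rfl (fun j _ => hterm j),
        Finset.sum_add_distrib, sigma_col_last T (by omega) p i, ← Finset.mul_sum,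
        L1 T (by omega) p hp1 hp2 i, mul_one]
    rw [hA_def, Matrix.add_mulVec, Matrix.smul_mulVec, Matrix.smul_mulVec]
    simp only [Pi.add_apply, Pi.smul_apply, smul_eq_mul]
    rw [hEw, hSw]
    linear_combination m * hκeq
  rw [← hsolve, Matrix.mulVec_mulVec, Matrix.nonsing_inv_mul A hdet, Matrix.one_mulVec]

lemma wvec_zero (T : ℕ) (hT : 3 ≤ T) (p κ : ℝ) :
    wvec T p κ ⟨0, Nat.lt_of_lt_of_le (Nat.zero_lt_succ 2) hT⟩ = κ * (1 / (1 + p)) := by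
  show (if (0 : ℕ) = T - 1 then p else 0) + κ * (((1 - p)
      + (if (0 : ℕ) = 0 then p else 0) + (if (0 : ℕ) = T - 1 then p else 0)) / (1 + p))
      = κ * (1 / (1 + p))
  rw [if_neg (show ¬ (0 : ℕ) = T - 1 by omega), if_pos rfl]
  ring

lemma wvec_mid (T : ℕ) (hT : 3 ≤ T) (p κ : ℝ) (j : Fin T)
    (h1 : 1 ≤ (j : ℕ)) (h2 : (j : ℕ) ≤ T - 2) :
    wvec T p κ j = κ * ((1 - p) / (1 + p)) := by
  rw [wvec, uvec, if_neg (show ¬ (j : ℕ) = T - 1 by omega),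
    if_neg (show ¬ (j : ℕ) = 0 by omega)]
  ring

lemma wvec_last (T : ℕ) (hT : 3 ≤ T) (p κ : ℝ) :
    wvec T p κ ⟨T - 1, Nat.sub_lt (Nat.lt_of_lt_of_le (Nat.zero_lt_succ 2) hT) Nat.one_pos⟩ = p + κ * (1 / (1 + p)) := by
  show (if T - 1 = T - 1 then p else 0) + κ * (((1 - p)
      + (if T - 1 = 0 then p else 0) + (if T - 1 = T - 1 then p else 0)) / (1 + p))
      = p + κ * (1 / (1 + p))
  rw [if_pos rfl, if_neg (show ¬ T - 1 = 0 by omega)]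
  ring

end Stmt15Aux

/-- failure of the ordering of credibility factors in the
heterogeneous INAR(1) model.  With `m = λ/(1−p)`, `Σ = m²ψ₀·E_T + m·Σ_{T,p}`
and `c_j = m(p^{T+1−j} + mψ₀)`, the credibility factors `w = Σ⁻¹c` satisfy
`w_1 > w_j` for `2 ≤ j ≤ T−1` and `w_T > w_1 > 0`; in particular `w` is not
monotonically nondecreasing, even though `c_j` is strictly increasing in `j`. -/
theorem stmt15 (T : ℕ) (hT : 3 ≤ T) (p : ℝ) (hp1 : 0 < p) (hp2 : p < 1)
    (lam ψ₀ : ℝ) (hlam : 0 < lam) (hψ₀ : 0 < ψ₀) :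
    (∀ j : Fin T, 1 ≤ (j : ℕ) → (j : ℕ) ≤ T - 2 →
      (((lam / (1 - p)) ^ 2 * ψ₀) • Matrix.of (fun _ _ : Fin T => (1 : ℝ)) +
          (lam / (1 - p)) • sigmaMat T p)⁻¹.mulVec
          (fun j : Fin T =>
            (lam / (1 - p)) * (p ^ (T - (j : ℕ)) + (lam / (1 - p)) * ψ₀)) j <
        (((lam / (1 - p)) ^ 2 * ψ₀) • Matrix.of (fun _ _ : Fin T => (1 : ℝ)) +
            (lam / (1 - p)) • sigmaMat T p)⁻¹.mulVec
            (fun j : Fin T =>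
              (lam / (1 - p)) * (p ^ (T - (j : ℕ)) + (lam / (1 - p)) * ψ₀))
            ⟨0, by omega⟩) ∧
    (((lam / (1 - p)) ^ 2 * ψ₀) • Matrix.of (fun _ _ : Fin T => (1 : ℝ)) +
        (lam / (1 - p)) • sigmaMat T p)⁻¹.mulVec
        (fun j : Fin T =>
          (lam / (1 - p)) * (p ^ (T - (j : ℕ)) + (lam / (1 - p)) * ψ₀))
        ⟨0, by omega⟩ <
      (((lam / (1 - p)) ^ 2 * ψ₀) • Matrix.of (fun _ _ : Fin T => (1 : ℝ)) +
          (lam / (1 - p)) • sigmaMat T p)⁻¹.mulVec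
          (fun j : Fin T =>
            (lam / (1 - p)) * (p ^ (T - (j : ℕ)) + (lam / (1 - p)) * ψ₀))
          ⟨T - 1, by omega⟩ ∧
    0 < (((lam / (1 - p)) ^ 2 * ψ₀) • Matrix.of (fun _ _ : Fin T => (1 : ℝ)) +
          (lam / (1 - p)) • sigmaMat T p)⁻¹.mulVec
          (fun j : Fin T =>
            (lam / (1 - p)) * (p ^ (T - (j : ℕ)) + (lam / (1 - p)) * ψ₀))
          ⟨0, by omega⟩ ∧
    ¬ (∀ i j : Fin T, i ≤ j →
        (((lam / (1 - p)) ^ 2 * ψ₀) • Matrix.of (fun _ _ : Fin T => (1 : ℝ)) +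
            (lam / (1 - p)) • sigmaMat T p)⁻¹.mulVec
            (fun j : Fin T =>
              (lam / (1 - p)) * (p ^ (T - (j : ℕ)) + (lam / (1 - p)) * ψ₀)) i ≤
          (((lam / (1 - p)) ^ 2 * ψ₀) • Matrix.of (fun _ _ : Fin T => (1 : ℝ)) +
              (lam / (1 - p)) • sigmaMat T p)⁻¹.mulVec
              (fun j : Fin T =>
                (lam / (1 - p)) * (p ^ (T - (j : ℕ)) + (lam / (1 - p)) * ψ₀)) j) ∧
    (∀ i j : Fin T, i < j →
      (lam / (1 - p)) * (p ^ (T - (i : ℕ)) + (lam / (1 - p)) * ψ₀) <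
        (lam / (1 - p)) * (p ^ (T - (j : ℕ)) + (lam / (1 - p)) * ψ₀)) := by
  have h1p : (0 : ℝ) < 1 - p := by linarith
  have hp1p : (0 : ℝ) < 1 + p := by linarith
  have hTd : (3 : ℝ) ≤ (T : ℝ) := by exact_mod_cast hT
  have hm : 0 < lam / (1 - p) := div_pos hlam h1p
  have hsol := Stmt15Aux.solve T hT p hp1 hp2 (lam / (1 - p)) ψ₀ hm hψ₀
  set K : ℝ := lam / (1 - p) * ψ₀ * (1 - p) /
      (1 + lam / (1 - p) * ψ₀ * (((T : ℝ) * (1 - p) + 2 * p) / (1 + p))) with hK_def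
  have hS : 0 < ((T : ℝ) * (1 - p) + 2 * p) / (1 + p) := by
    apply div_pos _ hp1p
    nlinarith
  have hden : 0 < 1 + lam / (1 - p) * ψ₀ * (((T : ℝ) * (1 - p) + 2 * p) / (1 + p)) := by
    nlinarith [mul_pos (mul_pos hm hψ₀) hS]
  have hK : 0 < K := by
    rw [hK_def]
    apply div_pos _ hden
    positivity
  rw [hsol]
  have h0 : Stmt15Aux.wvec T p K ⟨0, by omega⟩ = K * (1 / (1 + p)) :=
    Stmt15Aux.wvec_zero T hT p K
  have hlast : Stmt15Aux.wvec T p K ⟨T - 1, by omega⟩ = p + K * (1 / (1 + p)) :=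
    Stmt15Aux.wvec_last T hT p K
  have hfirst : ∀ j : Fin T, 1 ≤ (j : ℕ) → (j : ℕ) ≤ T - 2 →
      Stmt15Aux.wvec T p K j < Stmt15Aux.wvec T p K ⟨0, by omega⟩ := by
    intro j hj1 hj2
    rw [Stmt15Aux.wvec_mid T hT p K j hj1 hj2, h0]
    have hdiv : (1 - p) / (1 + p) < 1 / (1 + p) := by
      rw [div_lt_div_iff_of_pos_right hp1p]
      nlinarith
    exact (mul_lt_mul_iff_right₀ hK).mpr hdiv
  refine ⟨hfirst, ?_, ?_, ?_, ?_⟩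
  · rw [h0, hlast]
    linarith
  · rw [h0]
    positivity
  · intro hmono
    have h01 : (⟨0, by omega⟩ : Fin T) ≤ ⟨1, by omega⟩ := by
      rw [Fin.mk_le_mk]
      omega
    have ha := hmono ⟨0, by omega⟩ ⟨1, by omega⟩ h01
    have hb := hfirst ⟨1, by omega⟩ (by simp) (by simp; omega)
    linarith
  · intro i j hij
    have hlt : (i : ℕ) < (j : ℕ) := hij
    have hjT : (j : ℕ) < T := j.isLt
    have hexp : T - (j : ℕ) < T - (i : ℕ) := by omega
    have hpow := pow_lt_pow_right_of_lt_one₀ hp1 hp2 hexp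
    have := mul_lt_mul_of_pos_left
      (add_lt_add_right hpow ((lam / (1 - p)) * ψ₀)) hm
    linarith [this]
end
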